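/- Let k : ℝ → ℝ be continuous with support in [0,1], k ≤ 0 and k not identically zero. Then φ₀(r) = -(1/r)∫₀^r s·e^{s²/2}(∫_s^∞ e^{-l²/2} k(l) dl) ds satisfies φ₀(r) > 0 for all r > 0, and moreover there exists c > 0 such that φ₀(r) ≥ c·r/(r²+1) for all r ∈ (0,1]. -/

import Mathlib

open MeasureTheory Real Set

set_option maxHeartbeats 1000000 in
theorem stmt4 (k : ℝ → ℝ) (hk : Continuous k)
    (hsupp : Function.support k ⊆ Set.Icc 0 1)
    (hneg : ∀ x, k x ≤ 0) (hne : k ≠ 0)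
    (φ₀ : ℝ → ℝ)
    (hφ₀ : ∀ r > (0:ℝ), φ₀ r =
      -(1/r) * ∫ s in (0:ℝ)..r, s * Real.exp (s^2/2) *
        (∫ l in Set.Ioi s, Real.exp (-l^2/2) * k l)) :
    (∀ r > (0:ℝ), φ₀ r > 0) ∧
    ∃ c > (0:ℝ), ∀ r ∈ Set.Ioc (0:ℝ) 1, φ₀ r ≥ c * r / (r^2 + 1) := by
  classical
  obtain ⟨h, hh_def⟩ : ∃ h : ℝ → ℝ, h = fun l => Real.exp (-l^2/2) * k l := ⟨_, rfl⟩
  have hh_cont : Continuous h := by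
    rw [hh_def]
    exact (Real.continuous_exp.comp ((continuous_pow 2).neg.div_const 2)).mul hk
  have hh_supp : HasCompactSupport h := by
    apply HasCompactSupport.intro (isCompact_Icc (a := (0:ℝ)) (b := 1))
    intro x hx
    have hk0 : k x = 0 := by
      by_contra hkx
      exact hx (hsupp hkx)
    simp [hh_def, hk0]
  have hh_int : Integrable h := hh_cont.integrable_of_hasCompactSupport hh_supp
  have hh_nonpos : ∀ l, h l ≤ 0 := by
    intro l
    rw [hh_def]
    exact mul_nonpos_iff.2 (Or.inl ⟨(Real.exp_pos _).le, hneg l⟩)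
  obtain ⟨g, hg_def⟩ : ∃ g : ℝ → ℝ, g = fun s => ∫ l in Set.Ioi s, h l := ⟨_, rfl⟩
  have hg_nonpos : ∀ s, g s ≤ 0 := by
    intro s
    rw [hg_def]
    exact setIntegral_nonpos measurableSet_Ioi (fun l _ => hh_nonpos l)
  obtain ⟨C, hC_def⟩ : ∃ C : ℝ, C = ∫ l in Set.Ioi (0:ℝ), h l := ⟨_, rfl⟩
  obtain ⟨G, hG_def⟩ : ∃ G : ℝ → ℝ, G = fun s => C - ∫ l in (0:ℝ)..s, h l := ⟨_, rfl⟩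
  have hG_cont : Continuous G := by
    rw [hG_def]
    exact continuous_const.sub (hh_int.continuous_primitive 0)
  have hg_rep : ∀ s : ℝ, 0 ≤ s → g s = G s := by
    intro s hs
    have hu : Set.Ioc 0 s ∪ Set.Ioi s = Set.Ioi (0:ℝ) := Set.Ioc_union_Ioi_eq_Ioi hs
    have hsplit : (∫ l in Set.Ioc 0 s, h l) + ∫ l in Set.Ioi s, h l
        = ∫ l in Set.Ioi (0:ℝ), h l := by
      have h2 := (setIntegral_union (f := h) (μ := volume)
        (show Disjoint (Set.Ioc (0:ℝ) s) (Set.Ioi s) from Set.Ioc_disjoint_Ioi le_rfl)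
        measurableSet_Ioi hh_int.integrableOn hh_int.integrableOn).symm
      rw [hu] at h2
      exact h2
    have heq : (∫ l in (0:ℝ)..s, h l) = ∫ l in Set.Ioc 0 s, h l :=
      intervalIntegral.integral_of_le hs
    simp only [hg_def, hG_def, heq, hC_def]
    linarith
  -- find a bump interval
  obtain ⟨x₀, hx₀⟩ : ∃ x, k x ≠ 0 := Function.ne_iff.1 hne
  have hkx₀ : k x₀ < 0 := lt_of_le_of_ne (hneg x₀) hx₀
  have hx₀0 : 0 ≤ x₀ := (hsupp hx₀).1
  obtain ⟨ε, hε_def⟩ : ∃ ε : ℝ, ε = -(k x₀) / 2 := ⟨_, rfl⟩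
  have hε : 0 < ε := by rw [hε_def]; linarith
  have hU : IsOpen (k ⁻¹' Set.Iio (-ε)) := (isOpen_Iio).preimage hk
  have hx₀U : x₀ ∈ k ⁻¹' Set.Iio (-ε) := by
    simp only [Set.mem_preimage, Set.mem_Iio]
    rw [hε_def]; linarith
  obtain ⟨δ, hδ, hball⟩ := Metric.isOpen_iff.1 hU x₀ hx₀U
  obtain ⟨a, ha_def⟩ : ∃ a : ℝ, a = x₀ + δ/3 := ⟨_, rfl⟩
  obtain ⟨b, hb_def⟩ : ∃ b : ℝ, b = x₀ + δ/2 := ⟨_, rfl⟩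
  have ha_pos : 0 < a := by rw [ha_def]; linarith
  have hab : a < b := by rw [ha_def, hb_def]; linarith
  have hk_ab : ∀ y ∈ Set.Ioc a b, k y < -ε := by
    intro y hy
    have hmem : y ∈ Metric.ball x₀ δ := by
      rw [Real.ball_eq_Ioo]
      have h1 := hy.1
      have h2 := hy.2
      rw [ha_def] at h1
      rw [hb_def] at h2
      simp only [Set.mem_Ioo]
      exact ⟨by linarith, by linarith⟩
    exact hball hmem
  obtain ⟨m, hm_def⟩ : ∃ m : ℝ, m = ε * Real.exp (-b^2/2) := ⟨_, rfl⟩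
  have hm : 0 < m := by rw [hm_def]; exact mul_pos hε (Real.exp_pos _)
  obtain ⟨M, hM_def⟩ : ∃ M : ℝ, M = m * (b - a) := ⟨_, rfl⟩
  have hMpos : 0 < M := by rw [hM_def]; exact mul_pos hm (by linarith)
  -- g s ≤ -M for 0 ≤ s ≤ a
  have hgM : ∀ s : ℝ, 0 ≤ s → s ≤ a → g s ≤ -M := by
    intro s hs0 hsa
    rw [hg_def]
    have hsub : Set.Ioc a b ⊆ Set.Ioi s := fun y hy => lt_of_le_of_lt hsa hy.1
    have hunion : Set.Ioc a b ∪ (Set.Ioi s \ Set.Ioc a b) = Set.Ioi s :=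
      Set.union_diff_cancel hsub
    have hsplit : (∫ l in Set.Ioi s, h l)
        = (∫ l in Set.Ioc a b, h l) + ∫ l in Set.Ioi s \ Set.Ioc a b, h l := by
      have h2 := setIntegral_union (f := h) (μ := volume)
        (Set.disjoint_sdiff_right (s := Set.Ioc a b) (t := Set.Ioi s))
        (measurableSet_Ioi.diff measurableSet_Ioc) hh_int.integrableOn hh_int.integrableOn
      rw [hunion] at h2
      exact h2
    have h2 : (∫ l in Set.Ioi s \ Set.Ioc a b, h l) ≤ 0 :=
      setIntegral_nonpos (measurableSet_Ioi.diff measurableSet_Ioc) (fun l _ => hh_nonpos l)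
    have h1 : (∫ l in Set.Ioc a b, h l) ≤ -M := by
      have hle : ∀ y ∈ Set.Ioc a b, h y ≤ -m := by
        intro y hy
        have hky := hk_ab y hy
        have hy0 : 0 < y := lt_trans ha_pos hy.1
        have hyb : y ≤ b := hy.2
        have hexp : Real.exp (-b^2/2) ≤ Real.exp (-y^2/2) := by
          apply Real.exp_le_exp.2
          have hsq : y^2 ≤ b^2 := pow_le_pow_left₀ hy0.le hyb 2
          linarith
        have hexp_pos := Real.exp_pos (-y^2/2)
        have hstep : h y ≤ Real.exp (-y^2/2) * (-ε) := by
          rw [hh_def]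
          exact mul_le_mul_of_nonneg_left (le_of_lt hky) (le_of_lt hexp_pos)
        calc h y ≤ Real.exp (-y^2/2) * (-ε) := hstep
          _ ≤ -m := by
              rw [hm_def]
              nlinarith [mul_le_mul_of_nonneg_left hexp hε.le]
      calc (∫ l in Set.Ioc a b, h l) ≤ ∫ _l in Set.Ioc a b, (-m) :=
            setIntegral_mono_on hh_int.integrableOn
              (integrableOn_const measure_Ioc_lt_top.ne) measurableSet_Ioc hle
        _ = -M := by
            rw [setIntegral_const, measureReal_def, Real.volume_Ioc, smul_eq_mul,
              ENNReal.toReal_ofReal (by linarith : (0:ℝ) ≤ b - a), hM_def]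
            ring
    linarith
  -- the integrand
  obtain ⟨F, hF_def⟩ : ∃ F : ℝ → ℝ, F = fun s => s * Real.exp (s^2/2) * g s := ⟨_, rfl⟩
  have hF_nonpos : ∀ s, 0 ≤ s → F s ≤ 0 := by
    intro s hs
    have hgs := hg_nonpos s
    simp only [hF_def]
    exact mul_nonpos_iff.2 (Or.inl ⟨mul_nonneg hs (Real.exp_pos _).le, hgs⟩)
  have hFG_cont : Continuous (fun s => s * Real.exp (s^2/2) * G s) := by
    apply Continuous.mul _ hG_cont
    exact continuous_id.mul (Real.continuous_exp.comp ((continuous_pow 2).div_const 2))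
  -- key estimate
  have hkey : ∀ r : ℝ, 0 < r → φ₀ r ≥ (1/r) * (M * (min r a)^2 / 2) := by
    intro r hr
    obtain ⟨t, ht_def⟩ : ∃ t : ℝ, t = min r a := ⟨_, rfl⟩
    have ht_pos : 0 < t := by rw [ht_def]; exact lt_min hr ha_pos
    have htr : t ≤ r := by rw [ht_def]; exact min_le_left _ _
    have hta : t ≤ a := by rw [ht_def]; exact min_le_right _ _
    have hFeq : Set.EqOn F (fun s => s * Real.exp (s^2/2) * G s) (Set.uIcc 0 r) := by
      intro s hs
      rw [Set.uIcc_of_le (le_of_lt hr)] at hs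
      simp only [hF_def]
      rw [hg_rep s hs.1]
    have hFint : IntervalIntegrable F volume 0 r :=
      (hFG_cont.continuousOn.congr hFeq).intervalIntegrable
    have hsubset1 : Set.uIcc 0 t ⊆ Set.uIcc 0 r := by
      rw [Set.uIcc_of_le ht_pos.le, Set.uIcc_of_le hr.le]
      exact Set.Icc_subset_Icc le_rfl htr
    have hsubset2 : Set.uIcc t r ⊆ Set.uIcc 0 r := by
      rw [Set.uIcc_of_le htr, Set.uIcc_of_le hr.le]
      exact Set.Icc_subset_Icc ht_pos.le le_rfl
    have hFint1 : IntervalIntegrable F volume 0 t := hFint.mono_set hsubset1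
    have hFint2 : IntervalIntegrable F volume t r := hFint.mono_set hsubset2
    have hsplit : (∫ s in (0:ℝ)..r, F s) = (∫ s in (0:ℝ)..t, F s) + ∫ s in t..r, F s :=
      (intervalIntegral.integral_add_adjacent_intervals hFint1 hFint2).symm
    have h2 : (∫ s in t..r, F s) ≤ 0 := by
      have hn := intervalIntegral.integral_nonneg (μ := volume) (f := fun s => -F s) htr
        (fun u hu => by
          simp only [neg_nonneg]
          exact hF_nonpos u (le_trans (le_of_lt ht_pos) hu.1))
      rw [intervalIntegral.integral_neg] at hn
      linarith
    have h1 : (∫ s in (0:ℝ)..t, F s) ≤ -M * (t^2/2) := by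
      have hle : ∀ s ∈ Set.Icc 0 t, F s ≤ -M * s := by
        intro s hs
        have hg' := hgM s hs.1 (le_trans hs.2 hta)
        have he1 : 1 ≤ Real.exp (s^2/2) := Real.one_le_exp (by positivity)
        simp only [hF_def]
        calc s * Real.exp (s^2/2) * g s
            ≤ s * Real.exp (s^2/2) * (-M) :=
              mul_le_mul_of_nonneg_left hg' (mul_nonneg hs.1 (Real.exp_pos _).le)
          _ ≤ -M * s := by
              nlinarith [mul_nonneg (mul_nonneg hMpos.le hs.1) (sub_nonneg.2 he1)]
      have hmono := intervalIntegral.integral_mono_on (le_of_lt ht_pos) hFint1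
        ((continuous_const.mul continuous_id).intervalIntegrable 0 t) hle
      calc (∫ s in (0:ℝ)..t, F s) ≤ ∫ s in (0:ℝ)..t, -M * s := hmono
        _ = -M * (t^2/2) := by
            rw [intervalIntegral.integral_const_mul, integral_id]
            ring
    have hI : (∫ s in (0:ℝ)..r, F s) ≤ -(M * t^2 / 2) := by
      rw [hsplit]; linarith
    rw [hφ₀ r hr]
    have hIeq : (∫ s in (0:ℝ)..r, s * Real.exp (s^2/2) *
        (∫ l in Set.Ioi s, Real.exp (-l^2/2) * k l)) = ∫ s in (0:ℝ)..r, F s := by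
      simp only [hF_def, hg_def, hh_def]
    rw [hIeq, ← ht_def]
    have hmul := mul_le_mul_of_nonneg_left hI (one_div_nonneg.2 hr.le)
    rw [ge_iff_le]
    nlinarith [hmul]
  have part1 : ∀ r > (0:ℝ), φ₀ r > 0 := by
    intro r hr
    have hk' := hkey r hr
    have ht_pos : 0 < min r a := lt_min hr ha_pos
    have hpos : (0:ℝ) < (1/r) * (M * (min r a)^2 / 2) :=
      mul_pos (by positivity) (div_pos (mul_pos hMpos (pow_pos ht_pos 2)) two_pos)
    linarith
  refine ⟨part1, ?_⟩
  obtain ⟨a', ha'_def⟩ : ∃ a' : ℝ, a' = min a 1 := ⟨_, rfl⟩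
  have ha'_pos : 0 < a' := by rw [ha'_def]; exact lt_min ha_pos one_pos
  have ha'1 : a' ≤ 1 := by rw [ha'_def]; exact min_le_right _ _
  have ha'a : a' ≤ a := by rw [ha'_def]; exact min_le_left _ _
  have ha'sq : a'^2 ≤ 1 := by nlinarith
  have hc0 : 0 < M * a'^2 / 2 := div_pos (mul_pos hMpos (pow_pos ha'_pos 2)) two_pos
  refine ⟨M * a'^2 / 2, hc0, ?_⟩
  intro r hr
  obtain ⟨hr0, hr1⟩ := hr
  have hkey' := hkey r hr0
  have hr2 : (0:ℝ) < r^2 + 1 := by positivity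
  have hφpos : 0 < φ₀ r := part1 r hr0
  rw [ge_iff_le, div_le_iff₀ hr2]
  rcases le_or_gt r a' with hra' | hra'
  · have htr : min r a = r := min_eq_left (le_trans hra' ha'a)
    rw [htr] at hkey'
    have hrne : r ≠ 0 := ne_of_gt hr0
    have heq : (1/r) * (M * r^2 / 2) = M * r / 2 := by
      field_simp
    have h1 : M * r / 2 ≤ φ₀ r := by rw [← heq]; exact hkey'
    nlinarith [mul_pos hφpos (by positivity : (0:ℝ) < r^2),
      mul_nonneg (mul_nonneg hMpos.le hr0.le) (sub_nonneg.2 ha'sq)]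
  · have htr : a' ≤ min r a := le_min (le_of_lt hra') ha'a
    have h1 : (1/r) * (M * a'^2 / 2) ≤ φ₀ r := by
      have hmm : M * a'^2 / 2 ≤ M * (min r a)^2 / 2 := by
        have hp : a'^2 ≤ (min r a)^2 := pow_le_pow_left₀ ha'_pos.le htr 2
        nlinarith [mul_le_mul_of_nonneg_left hp hMpos.le]
      have h2 : (1/r) * (M * a'^2 / 2) ≤ (1/r) * (M * (min r a)^2 / 2) :=
        mul_le_mul_of_nonneg_left hmm (by positivity)
      linarith
    have h3 : (1:ℝ) ≤ 1/r := by rw [le_div_iff₀ hr0]; linarith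
    have h4 : M * a'^2 / 2 ≤ φ₀ r := by nlinarith
    nlinarith [mul_le_mul_of_nonneg_right h4 hr2.le,
      mul_nonneg hc0.le (sq_nonneg (r - 1/2))]
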